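/- Suppose that in the noise-free case (w ≡ 0) the switched projection estimator is run with θ*, θ̂(0) ∈ S, ‖S‖ := max_{x∈S}‖x‖. Then Σ_{t=0}^{∞} ρ(t)·e(t+1)²/‖φ(t)‖² ≤ 8‖S‖², where terms with φ(t)=0 are zero. -/
import Mathlib


open scoped RealInnerProductSpace

-- Projection inequality: if v is the nearest point of S to u and θ* ∈ S,
-- then ‖v - θ*‖ ≤ ‖u - θ*‖.
lemma proj_closer {p : ℕ} {S : Set (EuclideanSpace ℝ (Fin p))}
    (hconv : Convex ℝ S) {u v w : EuclideanSpace ℝ (Fin p)}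
    (hv : v ∈ S) (hw : w ∈ S)
    (hmin : ∀ z ∈ S, ‖u - v‖ ≤ ‖u - z‖) :
    ‖v - w‖ ≤ ‖u - w‖ := by
  haveI : Nonempty S := ⟨⟨v, hv⟩⟩
  have hinf : ‖u - v‖ = ⨅ z : S, ‖u - z‖ := by
    apply le_antisymm
    · exact le_ciInf fun z => hmin z z.2
    · exact ciInf_le ⟨0, fun x ⟨z, hz⟩ => hz ▸ norm_nonneg _⟩ (⟨v, hv⟩ : S)
  have hvar := (norm_eq_iInf_iff_real_inner_le_zero hconv hv).mp hinf w hw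
  have hexp : ‖u - w‖ ^ 2 = ‖u - v‖ ^ 2 + 2 * ⟪u - v, v - w⟫ + ‖v - w‖ ^ 2 := by
    have : u - w = (u - v) + (v - w) := by abel
    rw [this, norm_add_sq_real]
  have h1 : 0 ≤ ⟪u - v, v - w⟫ := by
    have : ⟪u - v, w - v⟫ = - ⟪u - v, v - w⟫ := by
      rw [← inner_neg_right]; congr 1; abel
    linarith [hvar, this ▸ hvar]
  have h2 : ‖v - w‖ ^ 2 ≤ ‖u - w‖ ^ 2 := by nlinarith [sq_nonneg ‖u - v‖]
  calc ‖v - w‖ = Real.sqrt (‖v - w‖ ^ 2) := (Real.sqrt_sq (norm_nonneg _)).symm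
    _ ≤ Real.sqrt (‖u - w‖ ^ 2) := Real.sqrt_le_sqrt h2
    _ = ‖u - w‖ := Real.sqrt_sq (norm_nonneg _)

theorem stmt_7 {p : ℕ} (S : Set (EuclideanSpace ℝ (Fin p)))
    (hconv : Convex ℝ S) (hcomp : IsCompact S)
    (θstar : EuclideanSpace ℝ (Fin p)) (hθstar : θstar ∈ S)
    (nS : ℝ) (hnS : IsGreatest ((fun x => ‖x‖) '' S) nS)
    (φ θhat θcheck : ℕ → EuclideanSpace ℝ (Fin p)) (y e : ℕ → ℝ)
    (ρ : ℕ → ℝ) (hρ : ∀ t, ρ t = 0 ∨ ρ t = 1)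
    (hρ0 : ∀ t, φ t = 0 → ρ t = 0)
    -- noise-free plant
    (hy : ∀ t, y (t + 1) = ⟪φ t, θstar⟫)
    (hθ0 : θhat 0 ∈ S)
    (he : ∀ t, e (t + 1) = y (t + 1) - ⟪φ t, θhat t⟫)
    (hcheck : ∀ t, θcheck (t + 1) = θhat t + (ρ t * (e (t + 1) / ‖φ t‖ ^ 2)) • φ t)
    (hproj : ∀ t, θhat (t + 1) ∈ S ∧
        ∀ z ∈ S, ‖θcheck (t + 1) - θhat (t + 1)‖ ≤ ‖θcheck (t + 1) - z‖) :
    ∑' t : ℕ, ρ t * (e (t + 1) ^ 2 / ‖φ t‖ ^ 2) ≤ 8 * nS ^ 2 := by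
  set V : ℕ → ℝ := fun t => ‖θhat t - θstar‖ ^ 2 with hV
  have hmemS : ∀ t, θhat t ∈ S := by
    intro t; cases t with
    | zero => exact hθ0
    | succ n => exact (hproj n).1
  -- key step inequality
  have hstep : ∀ t, ρ t * (e (t + 1) ^ 2 / ‖φ t‖ ^ 2) ≤ V t - V (t + 1) := by
    intro t
    have hcheckval : ‖θcheck (t + 1) - θstar‖ ^ 2
        = V t - ρ t * (e (t + 1) ^ 2 / ‖φ t‖ ^ 2) := by
      rcases hρ t with h0 | h1
      · rw [hcheck t, h0]; simp [hV]
      · have hφ : φ t ≠ 0 := fun h => by simpa [h1] using hρ0 t h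
        have hφn : (0:ℝ) < ‖φ t‖ ^ 2 := pow_pos (norm_pos_iff.mpr hφ) 2
        have herr : e (t + 1) = - ⟪φ t, θhat t - θstar⟫ := by
          rw [he t, hy t, inner_sub_right]; ring
        rw [hcheck t, h1]
        have : θhat t + (1 * (e (t + 1) / ‖φ t‖ ^ 2)) • φ t - θstar
            = (θhat t - θstar) + (e (t + 1) / ‖φ t‖ ^ 2) • φ t := by
          rw [one_mul]; abel
        have hip : ⟪φ t, θhat t - θstar⟫ = - e (t + 1) := by rw [herr]; ring
        rw [this, norm_add_sq_real, inner_smul_right, real_inner_comm, hip,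
          norm_smul, mul_pow, Real.norm_eq_abs, sq_abs]
        simp only [hV, h1, one_mul]
        field_simp
        ring
    have hproj' := proj_closer hconv (hproj t).1 hθstar (hproj t).2
    have : V (t + 1) ≤ ‖θcheck (t + 1) - θstar‖ ^ 2 :=
      pow_le_pow_left₀ (norm_nonneg _) hproj' 2
    linarith [hcheckval ▸ this]
  have hnonneg : ∀ t, 0 ≤ ρ t * (e (t + 1) ^ 2 / ‖φ t‖ ^ 2) := by
    intro t
    rcases hρ t with h | h <;> rw [h] <;> positivity
  have hnSnn : 0 ≤ nS := le_trans (norm_nonneg θstar) (hnS.2 ⟨θstar, hθstar, rfl⟩)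
  have hV0 : V 0 ≤ 4 * nS ^ 2 := by
    have h1 : ‖θhat 0‖ ≤ nS := hnS.2 ⟨θhat 0, hθ0, rfl⟩
    have h2 : ‖θstar‖ ≤ nS := hnS.2 ⟨θstar, hθstar, rfl⟩
    have h3 : ‖θhat 0 - θstar‖ ≤ ‖θhat 0‖ + ‖θstar‖ := norm_sub_le _ _
    have : ‖θhat 0 - θstar‖ ≤ 2 * nS := by linarith
    calc V 0 = ‖θhat 0 - θstar‖ ^ 2 := rfl
      _ ≤ (2 * nS) ^ 2 := pow_le_pow_left₀ (norm_nonneg _) this 2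
      _ = 4 * nS ^ 2 := by ring
  have hble : ∀ n, ∑ i ∈ Finset.range n, ρ i * (e (i + 1) ^ 2 / ‖φ i‖ ^ 2) ≤ 8 * nS ^ 2 := by
    intro n
    have htel : ∑ i ∈ Finset.range n, (V i - V (i + 1)) = V 0 - V n :=
      Finset.sum_range_sub' V n
    have hsum : ∑ i ∈ Finset.range n, ρ i * (e (i + 1) ^ 2 / ‖φ i‖ ^ 2)
        ≤ ∑ i ∈ Finset.range n, (V i - V (i + 1)) :=
      Finset.sum_le_sum fun i _ => hstep i
    have hVn : 0 ≤ V n := sq_nonneg _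
    rw [htel] at hsum
    nlinarith
  exact Summable.tsum_le_of_sum_range_le (summable_of_sum_range_le hnonneg hble) hble
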